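/- For every natural number n, ∑_{s=0}^{n} (-1)^s (binom(n,s))^3 = ∑_{F} (-1)^{|F|}, where the right-hand sum ranges over all facets F of Δ(n) every vertex of which satisfies the B-condition in F. -/

import Mathlib

/-- Vertices of `Δ(n)`: integer triples. -/
abbrev V : Type := ℕ × ℕ × ℕ

/-- The strict componentwise order on triples. -/
def slt (u v : V) : Prop := u.1 < v.1 ∧ u.2.1 < v.2.1 ∧ u.2.2 < v.2.2

/-- A face of `Δ(n)`: a finite subset of `{1,…,n}³` that is a chain under `slt`. -/
def IsFace (n : ℕ) (F : Finset V) : Prop :=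
  (∀ v ∈ F, v.1 ∈ Finset.Icc 1 n ∧ v.2.1 ∈ Finset.Icc 1 n ∧ v.2.2 ∈ Finset.Icc 1 n) ∧
  (∀ u ∈ F, ∀ v ∈ F, u ≠ v → slt u v ∨ slt v u)

/-- A facet of `Δ(n)`: an inclusion-maximal face. -/
def IsFacet (n : ℕ) (F : Finset V) : Prop :=
  IsFace n F ∧ ∀ G : Finset V, IsFace n G → F ⊆ G → F = G

/-- The `ℓ`-th vertex of the (increasingly sorted) list `L` satisfies the B-condition. -/
def BCond (L : List V) (ℓ : ℕ) (h : ℓ < L.length) : Prop :=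
  (ℓ = 0 ∧ (1 < (L.get ⟨ℓ, h⟩).1 ∨ 1 < (L.get ⟨ℓ, h⟩).2.1 ∨ 1 < (L.get ⟨ℓ, h⟩).2.2)) ∨
  (0 < ℓ ∧
    (1 < (L.get ⟨ℓ, h⟩).1 - (L.get ⟨ℓ - 1, by omega⟩).1 ∨
     1 < (L.get ⟨ℓ, h⟩).2.1 - (L.get ⟨ℓ - 1, by omega⟩).2.1 ∨
     1 < (L.get ⟨ℓ, h⟩).2.2 - (L.get ⟨ℓ - 1, by omega⟩).2.2))

/-- `F` is a homology facet of `Δ(n)`: a facet all of whose vertices satisfy the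
B-condition (with respect to the unique increasing listing of `F`). -/
def HomFacet (n : ℕ) (F : Finset V) : Prop :=
  IsFacet n F ∧ ∀ L : List V, L.Chain' slt → L.toFinset = F →
    ∀ ℓ : ℕ, ∀ h : ℓ < L.length, BCond L ℓ h

open Classical

namespace EP

instance : DecidableRel slt := fun u v => inferInstanceAs (Decidable (_ ∧ _ ∧ _))

instance : IsTrans V slt := ⟨fun _ _ _ h h' => ⟨h.1.trans h'.1, h.2.1.trans h'.2.1, h.2.2.trans h'.2.2⟩⟩

lemma slt_irrefl (v : V) : ¬ slt v v := fun h => lt_irrefl _ h.1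

lemma slt_asymm {u v : V} (h : slt u v) : ¬ slt v u := fun h' => lt_irrefl _ (h.1.trans h'.1)

def cube (n : ℕ) : Finset V := Finset.Icc 1 n ×ˢ Finset.Icc 1 n ×ˢ Finset.Icc 1 n

lemma mem_cube {n : ℕ} {v : V} :
    v ∈ cube n ↔ (1 ≤ v.1 ∧ v.1 ≤ n) ∧ (1 ≤ v.2.1 ∧ v.2.1 ≤ n) ∧ (1 ≤ v.2.2 ∧ v.2.2 ≤ n) := by
  simp [cube, Finset.mem_Icc]

def key (v : V) : ℕ := Nat.pair v.1 (Nat.pair v.2.1 v.2.2)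

lemma key_inj : Function.Injective key := by
  rintro ⟨a, b, c⟩ ⟨d, e, f⟩ h
  simp only [key, Nat.pair_eq_pair] at h
  obtain ⟨h1, h2, h3⟩ := h
  simp_all

lemma key_lt_of_slt {u v : V} (h : slt u v) : key u < key v := by
  calc key u < Nat.pair v.1 (Nat.pair u.2.1 u.2.2) := Nat.pair_lt_pair_left _ h.1
    _ ≤ Nat.pair v.1 (Nat.pair v.2.1 u.2.2) :=
        le_of_lt (Nat.pair_lt_pair_right _ (Nat.pair_lt_pair_left _ h.2.1))
    _ < key v := Nat.pair_lt_pair_right _ (Nat.pair_lt_pair_right _ h.2.2)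

lemma pairwise_of_chain {L : List V} (h : L.Chain' slt) : L.Pairwise slt :=
  List.isChain_iff_pairwise.mp h

lemma nodup_of_chain {L : List V} (h : L.Chain' slt) : L.Nodup :=
  (pairwise_of_chain h).imp (fun h' => by rintro rfl; exact slt_irrefl _ h')

instance : IsAntisymm ℕ (· < ·) := ⟨fun a b h h' => absurd h (by omega)⟩

/-- Uniqueness of the increasing listing of a chain. -/
lemma chain_eq_of_toFinset_eq {L L' : List V} (h : L.Chain' slt) (h' : L'.Chain' slt)
    (he : L.toFinset = L'.toFinset) : L = L' := by
  have hp : L.Perm L' :=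
    List.perm_of_nodup_nodup_toFinset_eq (nodup_of_chain h) (nodup_of_chain h') he
  have hmap : L.map key = L'.map key := by
    refine List.Perm.eq_of_pairwise' (r := (· < · : ℕ → ℕ → Prop)) ?_ ?_ (hp.map key)
    · exact (List.pairwise_map).mpr ((pairwise_of_chain h).imp key_lt_of_slt)
    · exact (List.pairwise_map).mpr ((pairwise_of_chain h').imp key_lt_of_slt)
  exact (List.map_injective_iff.mpr key_inj) hmap

def kle (u v : V) : Prop := key u ≤ key v

instance : DecidableRel kle := fun u v => inferInstanceAs (Decidable (_ ≤ _))
instance : IsTrans V kle := ⟨fun _ _ _ h h' => le_trans h h'⟩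
instance : IsTotal V kle := ⟨fun u v => le_total _ _⟩
instance : IsAntisymm V kle := ⟨fun u v h h' => key_inj (le_antisymm h h')⟩

def sortL (F : Finset V) : List V := F.sort kle

lemma sortL_toFinset (F : Finset V) : (sortL F).toFinset = F := Finset.sort_toFinset _ _

lemma length_sortL (F : Finset V) : (sortL F).length = F.card := Finset.length_sort _

lemma pairwise_comp {L : List V} (h : L.Pairwise slt) {u v : V} (hu : u ∈ L) (hv : v ∈ L)
    (hne : u ≠ v) : slt u v ∨ slt v u := by
  induction L with
  | nil => simp at hu
  | cons a l ih =>
    have h1 := (List.pairwise_cons.mp h).1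
    have h2 := (List.pairwise_cons.mp h).2
    rcases List.mem_cons.mp hu with h3 | h3 <;> rcases List.mem_cons.mp hv with h4 | h4
    · exact absurd (h3.trans h4.symm) hne
    · exact Or.inl (h3 ▸ h1 _ h4)
    · exact Or.inr (h4 ▸ h1 _ h3)
    · exact ih h2 h3 h4

lemma sortL_chain' {F : Finset V} (hF : ∀ u ∈ F, ∀ v ∈ F, u ≠ v → slt u v ∨ slt v u) :
    (sortL F).Chain' slt := by
  rw [List.Chain', List.isChain_iff_pairwise, List.pairwise_iff_get]
  intro i j hij
  have hs : (sortL F).Pairwise kle := Finset.pairwise_sort _ _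
  have hn : (sortL F).Nodup := Finset.sort_nodup _ _
  have hle : kle ((sortL F).get i) ((sortL F).get j) := List.Pairwise.rel_get_of_lt hs hij
  have hne : (sortL F).get i ≠ (sortL F).get j := by
    intro h
    exact absurd ((List.Nodup.get_inj_iff hn).mp h) (Fin.ne_of_lt hij)
  have hmi : (sortL F).get i ∈ F := (Finset.mem_sort kle).mp (List.get_mem _ _)
  have hmj : (sortL F).get j ∈ F := (Finset.mem_sort kle).mp (List.get_mem _ _)
  rcases hF _ hmi _ hmj hne with h | h
  · exact h
  · exact absurd hle (not_le.mpr (key_lt_of_slt h))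

noncomputable def Faces (n : ℕ) : Finset (Finset V) := (cube n).powerset.filter (IsFace n)

noncomputable def CL (n : ℕ) : Finset (List V) := (Faces n).image sortL

lemma toFinset_face {n : ℕ} {L : List V} (hc : L.Chain' slt) (hb : ∀ v ∈ L, v ∈ cube n) :
    IsFace n L.toFinset := by
  constructor
  · intro v hv
    have := hb v (List.mem_toFinset.mp hv)
    rw [mem_cube] at this
    simp [Finset.mem_Icc]
    omega
  · intro u hu v hv hne
    exact pairwise_comp (pairwise_of_chain hc) (List.mem_toFinset.mp hu) (List.mem_toFinset.mp hv) hne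

lemma mem_Faces {n : ℕ} {F : Finset V} : F ∈ Faces n ↔ IsFace n F := by
  constructor
  · intro h; exact (Finset.mem_filter.mp h).2
  · intro h
    refine Finset.mem_filter.mpr ⟨Finset.mem_powerset.mpr ?_, h⟩
    intro v hv
    have := h.1 v hv
    rw [mem_cube]
    simp only [Finset.mem_Icc] at this
    omega

lemma sortL_chain {n : ℕ} {F : Finset V} (hF : IsFace n F) : (sortL F).Chain' slt :=
  sortL_chain' hF.2

lemma sortL_toFinset_eq {L : List V} (hc : L.Chain' slt) : sortL L.toFinset = L := by
  refine chain_eq_of_toFinset_eq ?_ hc (sortL_toFinset _)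
  refine sortL_chain' ?_
  intro u hu v hv hne
  exact pairwise_comp (pairwise_of_chain hc) (List.mem_toFinset.mp hu) (List.mem_toFinset.mp hv) hne

lemma mem_CL {n : ℕ} {L : List V} : L ∈ CL n ↔ L.Chain' slt ∧ ∀ v ∈ L, v ∈ cube n := by
  constructor
  · intro h
    obtain ⟨F, hF, rfl⟩ := Finset.mem_image.mp h
    have hface := (Finset.mem_filter.mp hF).2
    refine ⟨sortL_chain hface, fun v hv => ?_⟩
    have hvF : v ∈ F := (Finset.mem_sort kle).mp hv
    have := hface.1 v hvF
    rw [mem_cube]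
    simp only [Finset.mem_Icc] at this
    omega
  · rintro ⟨hc, hb⟩
    refine Finset.mem_image.mpr ⟨L.toFinset, mem_Faces.mpr (toFinset_face hc hb), sortL_toFinset_eq hc⟩

lemma sum_faces_eq {n : ℕ} (q : Finset V → Prop) :
    ∑ F ∈ (Faces n).filter q, (-1 : ℤ) ^ F.card
      = ∑ L ∈ (CL n).filter (fun L => q L.toFinset), (-1 : ℤ) ^ L.length := by
  refine Finset.sum_nbij' (i := sortL) (j := List.toFinset) ?_ ?_ ?_ ?_ ?_
  · intro F hF
    have h1 := Finset.mem_filter.mp hF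
    have hface := mem_Faces.mp h1.1
    refine Finset.mem_filter.mpr ⟨?_, ?_⟩
    · exact Finset.mem_image.mpr ⟨F, h1.1, rfl⟩
    · rw [sortL_toFinset]; exact h1.2
  · intro L hL
    have h1 := Finset.mem_filter.mp hL
    have h2 := mem_CL.mp h1.1
    exact Finset.mem_filter.mpr ⟨mem_Faces.mpr (toFinset_face h2.1 h2.2), h1.2⟩
  · intro F hF; exact sortL_toFinset F
  · intro L hL
    exact sortL_toFinset_eq (mem_CL.mp (Finset.mem_filter.mp hL).1).1
  · intro F hF; rw [length_sortL F]

lemma sorted_lt_of_sorted_nodup {a : List ℕ} (hs : a.Pairwise (· ≤ ·)) (hn : a.Nodup) :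
    a.Pairwise (· < ·) := by
  have := List.Pairwise.and hs hn
  exact this.imp (fun h => lt_of_le_of_ne h.1 h.2)

noncomputable def SL (n s : ℕ) : Finset (List ℕ) :=
  (Finset.powersetCard s (Finset.Icc 1 n)).image (fun A => Finset.sort A (· ≤ ·))

lemma mem_SL {n s : ℕ} {a : List ℕ} :
    a ∈ SL n s ↔ a.Chain' (· < ·) ∧ a.length = s ∧ ∀ x ∈ a, x ∈ Finset.Icc 1 n := by
  constructor
  · intro h
    obtain ⟨A, hA, rfl⟩ := Finset.mem_image.mp h
    obtain ⟨hsub, hcard⟩ := Finset.mem_powersetCard.mp hA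
    refine ⟨?_, ?_, ?_⟩
    · exact List.isChain_iff_pairwise.mpr
        (sorted_lt_of_sorted_nodup (Finset.pairwise_sort _ _) (Finset.sort_nodup _ _))
    · rw [Finset.length_sort]; exact hcard
    · intro x hx; exact hsub ((Finset.mem_sort _).mp hx)
  · rintro ⟨hc, hlen, hmem⟩
    have hpw : a.Pairwise (· < ·) := List.isChain_iff_pairwise.mp hc
    have hnd : a.Nodup := hpw.imp ne_of_lt
    refine Finset.mem_image.mpr ⟨a.toFinset, ?_, ?_⟩
    · refine Finset.mem_powersetCard.mpr ⟨?_, ?_⟩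
      · intro x hx; exact hmem x (List.mem_toFinset.mp hx)
      · rw [List.toFinset_card_of_nodup hnd]; exact hlen
    · refine List.Perm.eq_of_pairwise' (r := (· ≤ · : ℕ → ℕ → Prop)) (Finset.pairwise_sort _ _)
        (hpw.imp le_of_lt) ?_
      exact List.perm_of_nodup_nodup_toFinset_eq (Finset.sort_nodup _ _) hnd
        (by rw [Finset.sort_toFinset])

lemma card_SL (n s : ℕ) : (SL n s).card = n.choose s := by
  rw [SL, Finset.card_image_of_injOn, Finset.card_powersetCard, Nat.card_Icc]
  · norm_num
  · intro A hA B hB h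
    have : (Finset.sort A (· ≤ ·)).toFinset = (Finset.sort B (· ≤ ·)).toFinset := by exact congrArg List.toFinset h
    rwa [Finset.sort_toFinset, Finset.sort_toFinset] at this

lemma zip3_map (L : List V) :
    (L.map (·.1)).zip ((L.map (·.2.1)).zip (L.map (·.2.2))) = L := by
  induction L with
  | nil => rfl
  | cons v l ih => simp [List.zip_cons_cons, ih]

lemma chain_map_proj {L : List V} (hpw : L.Pairwise slt) (f : V → ℕ)
    (hf : ∀ u v : V, slt u v → f u < f v) : (L.map f).Chain' (· < ·) :=
  List.isChain_iff_pairwise.mpr ((List.pairwise_map).mpr (hpw.imp (fun h => hf _ _ h)))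

lemma chain'_zip3 {a b c : List ℕ} (ca : a.Chain' (· < ·)) (cb : b.Chain' (· < ·))
    (cc : c.Chain' (· < ·)) (hab : b.length = a.length) (hac : c.length = a.length) :
    (a.zip (b.zip c)).Chain' slt := by
  have hbc : (b.zip c).length = a.length := by simp [hab, hac]
  have hlen : (a.zip (b.zip c)).length = a.length := by simp [hbc]
  rw [List.Chain', List.isChain_iff_getElem]
  intro i hi
  rw [hlen] at hi
  simp only [List.get_eq_getElem, List.getElem_zip]
  have g1 := List.isChain_iff_getElem.mp ca i (by omega)
  have g2 := List.isChain_iff_getElem.mp cb i (by omega)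
  have g3 := List.isChain_iff_getElem.mp cc i (by omega)
  exact ⟨g1, g2, g3⟩

lemma unzip3_1 {a : List ℕ} {bc : List (ℕ × ℕ)} (h : a.length ≤ bc.length) :
    (a.zip bc).map (·.1) = a := List.map_fst_zip h

lemma card_CL_len (n s : ℕ) :
    ((CL n).filter (fun L => L.length = s)).card = (n.choose s) ^ 3 := by
  have key : ((CL n).filter (fun L => L.length = s)).card = (SL n s ×ˢ SL n s ×ˢ SL n s).card := by
    refine Finset.card_bij' (i := fun L _ => (L.map (·.1), L.map (·.2.1), L.map (·.2.2)))
      (j := fun t _ => t.1.zip (t.2.1.zip t.2.2)) ?_ ?_ ?_ ?_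
    · intro L hL
      obtain ⟨hCL, hlen⟩ := Finset.mem_filter.mp hL
      obtain ⟨hc, hb⟩ := mem_CL.mp hCL
      have hpw := pairwise_of_chain hc
      have memb : ∀ f : V → ℕ, (∀ v : V, v ∈ cube n → f v ∈ Finset.Icc 1 n) →
          ∀ x ∈ L.map f, x ∈ Finset.Icc 1 n := by
        intro f hf x hx
        obtain ⟨v, hv, rfl⟩ := List.mem_map.mp hx
        exact hf v (hb v hv)
      simp only [Finset.mem_product]
      refine ⟨mem_SL.mpr ⟨chain_map_proj hpw _ (fun u v h => h.1), by simpa using hlen,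
          memb _ (fun v hv => by have := mem_cube.mp hv; simp [Finset.mem_Icc]; omega)⟩,
        mem_SL.mpr ⟨chain_map_proj hpw _ (fun u v h => h.2.1), by simpa using hlen,
          memb _ (fun v hv => by have := mem_cube.mp hv; simp [Finset.mem_Icc]; omega)⟩,
        mem_SL.mpr ⟨chain_map_proj hpw _ (fun u v h => h.2.2), by simpa using hlen,
          memb _ (fun v hv => by have := mem_cube.mp hv; simp [Finset.mem_Icc]; omega)⟩⟩
    · rintro ⟨a, b, c⟩ ht
      simp only [Finset.mem_product] at ht
      obtain ⟨c1, l1, m1⟩ := mem_SL.mp ht.1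
      obtain ⟨c2, l2, m2⟩ := mem_SL.mp ht.2.1
      obtain ⟨c3, l3, m3⟩ := mem_SL.mp ht.2.2
      dsimp only
      have hlen : (a.zip (b.zip c)).length = s := by simp [l1, l2, l3]
      refine Finset.mem_filter.mpr ⟨mem_CL.mpr ⟨?_, ?_⟩, hlen⟩
      · exact chain'_zip3 c1 c2 c3 (by omega) (by omega)
      · intro v hv
        obtain ⟨hv1, hv23⟩ := List.of_mem_zip hv
        obtain ⟨hv2, hv3⟩ := List.of_mem_zip hv23
        have b1 := m1 _ hv1
        have b2 := m2 _ hv2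
        have b3 := m3 _ hv3
        simp only [Finset.mem_Icc] at b1 b2 b3
        exact mem_cube.mpr ⟨b1, b2, b3⟩
    · intro L _
      dsimp only
      exact zip3_map L
    · rintro ⟨a, b, c⟩ ht
      simp only [Finset.mem_product] at ht
      have l1 := (mem_SL.mp ht.1).2.1
      have l2 := (mem_SL.mp ht.2.1).2.1
      have l3 := (mem_SL.mp ht.2.2).2.1
      dsimp only
      have hbc : (b.zip c).length = s := by simp [l2, l3]
      have e1 : (a.zip (b.zip c)).map (·.1) = a := List.map_fst_zip (by omega)
      have e23 : (a.zip (b.zip c)).map Prod.snd = b.zip c := List.map_snd_zip (by omega)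
      have e2 : (b.zip c).map Prod.fst = b := List.map_fst_zip (by omega)
      have e3 : (b.zip c).map Prod.snd = c := List.map_snd_zip (by omega)
      have m21 : (a.zip (b.zip c)).map (·.2.1) = ((a.zip (b.zip c)).map Prod.snd).map Prod.fst := by
        rw [List.map_map]; rfl
      have m22 : (a.zip (b.zip c)).map (·.2.2) = ((a.zip (b.zip c)).map Prod.snd).map Prod.snd := by
        rw [List.map_map]; rfl
      rw [Prod.ext_iff, Prod.ext_iff]
      exact ⟨e1, by dsimp only; rw [m21, e23, e2], by dsimp only; rw [m22, e23, e3]⟩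
  rw [key]
  simp only [Finset.card_product, card_SL]
  ring

lemma len_le_of_mem_CL {n : ℕ} {L : List V} (h : L ∈ CL n) : L.length ≤ n := by
  obtain ⟨hc, hb⟩ := mem_CL.mp h
  have hpw := pairwise_of_chain hc
  have hchain : (L.map (·.1)).Chain' (· < ·) := chain_map_proj hpw _ (fun u v h => h.1)
  have hnd : (L.map (·.1)).Nodup :=
    (List.isChain_iff_pairwise.mp hchain).imp ne_of_lt
  have hsub : (L.map (·.1)).toFinset ⊆ Finset.Icc 1 n := by
    intro x hx
    obtain ⟨v, hv, rfl⟩ := List.mem_map.mp (List.mem_toFinset.mp hx)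
    have := mem_cube.mp (hb v hv)
    simp [Finset.mem_Icc]; omega
  calc L.length = (L.map (·.1)).length := by simp
    _ = (L.map (·.1)).toFinset.card := (List.toFinset_card_of_nodup hnd).symm
    _ ≤ (Finset.Icc 1 n).card := Finset.card_le_card hsub
    _ = n := by rw [Nat.card_Icc]; omega

lemma sum_CL (n : ℕ) :
    ∑ L ∈ CL n, (-1 : ℤ) ^ L.length
      = ∑ s ∈ Finset.range (n + 1), (-1 : ℤ) ^ s * (n.choose s : ℤ) ^ 3 := by
  rw [← Finset.sum_fiberwise_of_maps_to (g := fun L : List V => L.length)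
    (t := Finset.range (n + 1))
    (fun L hL => Finset.mem_range.mpr (Nat.lt_succ_of_le (len_le_of_mem_CL hL)))]
  refine Finset.sum_congr rfl ?_
  intro s _
  have step : ∑ L ∈ (CL n).filter (fun L => L.length = s), (-1 : ℤ) ^ L.length
      = ∑ _L ∈ (CL n).filter (fun L => L.length = s), (-1 : ℤ) ^ s :=
    Finset.sum_congr rfl (fun L hL => by rw [(Finset.mem_filter.mp hL).2])
  rw [step, Finset.sum_const, card_CL_len, nsmul_eq_mul]
  push_cast
  ring

/-- Successor triple. -/
def suc (p : V) : V := (p.1 + 1, p.2.1 + 1, p.2.2 + 1)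

/-- The scan: toggle the first insertable/deletable vertex of the form `prev + (1,1,1)`. -/
def scan (n : ℕ) (p : V) : List V → Option (List V)
  | [] => if suc p ∈ cube n then some [suc p] else none
  | v :: r =>
    if v = suc p then some r
    else if slt (suc p) v then some (suc p :: v :: r)
    else (scan n v r).map (v :: ·)

/-- Fixed points of the scan. -/
def Blocked (n : ℕ) (p : V) : List V → Prop
  | [] => suc p ∉ cube n
  | v :: r => v ≠ suc p ∧ ¬ slt (suc p) v ∧ Blocked n v r

lemma scan_eq_none_iff (n : ℕ) (p : V) (L : List V) :
    scan n p L = none ↔ Blocked n p L := by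
  induction L generalizing p with
  | nil =>
    by_cases h : suc p ∈ cube n <;> simp [scan, Blocked, h]
  | cons v r ih =>
    by_cases h1 : v = suc p
    · simp [scan, Blocked, h1]
    · by_cases h2 : slt (suc p) v
      · simp [scan, Blocked, h1, h2]
      · simp [scan, Blocked, h1, h2, Option.map_eq_none_iff, ih]

lemma slt_suc_self (p : V) : slt p (suc p) := ⟨Nat.lt_succ_self _, Nat.lt_succ_self _, Nat.lt_succ_self _⟩

lemma slt_of_slt_suc {p v : V} (h : slt (suc p) v) : slt p v :=
  Trans.trans (slt_suc_self p) h

lemma scan_length {n : ℕ} {p : V} {L L' : List V} (h : scan n p L = some L') :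
    L'.length = L.length + 1 ∨ L.length = L'.length + 1 := by
  induction L generalizing p L' with
  | nil =>
    by_cases hb : suc p ∈ cube n <;> simp_all [scan] <;> simp [← h]
  | cons v r ih =>
    by_cases h1 : v = suc p
    · simp_all [scan]
    · by_cases h2 : slt (suc p) v
      · simp_all [scan]; simp [← h]
      · simp only [scan, h1, h2, if_false, if_neg, Option.map_eq_some_iff] at h
        · obtain ⟨r', hr', rfl⟩ := h
          rcases ih hr' with h | h <;> simp [h] <;> omega

/-- Invariant: `p :: L` is a chain and all entries of `L` lie in the cube. -/
def OKL (n : ℕ) (p : V) (L : List V) : Prop :=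
  (p :: L).Chain' slt ∧ ∀ v ∈ L, v ∈ cube n

lemma suc_mem_cube {n : ℕ} {p v : V} (h : slt (suc p) v) (hv : v ∈ cube n) :
    suc p ∈ cube n := by
  have := mem_cube.mp hv
  exact mem_cube.mpr (by
    obtain ⟨h1, h2, h3⟩ := h
    simp [suc] at *
    omega)

lemma scan_okl {n : ℕ} {p : V} {L L' : List V} (h : scan n p L = some L') (hok : OKL n p L) :
    OKL n p L' := by
  induction L generalizing p L' with
  | nil =>
    by_cases hb : suc p ∈ cube n
    · simp only [scan, if_pos hb] at h
      obtain rfl := Option.some_injective _ h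
      exact ⟨List.isChain_cons_cons.mpr ⟨slt_suc_self p, List.isChain_singleton _⟩,
        by intro v hv; simp at hv; subst hv; exact hb⟩
    · simp [scan, hb] at h
  | cons v r ih =>
    obtain ⟨hc, hb⟩ := hok
    have hpv : slt p v := (List.isChain_cons_cons.mp hc).1
    have hcr : (v :: r).Chain' slt := (List.isChain_cons_cons.mp hc).2
    by_cases h1 : v = suc p
    · simp only [scan, if_pos h1] at h
      obtain rfl := Option.some_injective _ h
      constructor
      · have hpw : (p :: v :: r).Pairwise slt := pairwise_of_chain hc
        have hsub : List.Sublist (p :: r) (p :: v :: r) :=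
          List.Sublist.cons₂ _ (List.sublist_cons_self _ _)
        exact List.isChain_iff_pairwise.mpr (hpw.sublist hsub)
      · intro w hw; exact hb w (List.mem_cons_of_mem _ hw)
    · by_cases h2 : slt (suc p) v
      · simp only [scan, if_neg h1, if_pos h2] at h
        obtain rfl := Option.some_injective _ h
        constructor
        · exact List.isChain_cons_cons.mpr ⟨slt_suc_self p, List.isChain_cons_cons.mpr ⟨h2, hcr⟩⟩
        · intro w hw
          rcases List.mem_cons.mp hw with rfl | hw
          · exact suc_mem_cube h2 (hb v (List.mem_cons_self))
          · exact hb w hw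
      · simp only [scan, if_neg h1, if_neg h2, Option.map_eq_some_iff] at h
        obtain ⟨r', hr', rfl⟩ := h
        have ihh := ih hr' ⟨hcr, fun w hw => hb w (List.mem_cons_of_mem _ hw)⟩
        constructor
        · exact List.isChain_cons_cons.mpr ⟨hpv, ihh.1⟩
        · intro w hw
          rcases List.mem_cons.mp hw with rfl | hw
          · exact hb w (List.mem_cons_self)
          · exact ihh.2 w hw

lemma scan_invol {n : ℕ} {p : V} {L L' : List V} (hok : OKL n p L) (h : scan n p L = some L') :
    scan n p L' = some L := by
  induction L generalizing p L' with
  | nil =>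
    by_cases hb : suc p ∈ cube n
    · simp only [scan, if_pos hb] at h
      obtain rfl := Option.some_injective _ h
      simp [scan]
    · simp [scan, hb] at h
  | cons v r ih =>
    obtain ⟨hc, hb⟩ := hok
    have hpv : slt p v := (List.isChain_cons_cons.mp hc).1
    have hcr : (v :: r).Chain' slt := (List.isChain_cons_cons.mp hc).2
    by_cases h1 : v = suc p
    · simp only [scan, if_pos h1] at h
      obtain rfl := Option.some_injective _ h
      cases r with
      | nil =>
        have : suc p ∈ cube n := h1 ▸ hb v (List.mem_cons_self)
        simp [scan, this, h1]
      | cons w r' =>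
        have hvw : slt v w := (List.isChain_cons_cons.mp hcr).1
        have hw1 : ¬ w = suc p := by
          rw [← h1]; intro hh; rw [hh] at hvw; exact slt_irrefl _ hvw
        have hw2 : slt (suc p) w := h1 ▸ hvw
        simp [scan, hw1, hw2, h1]
    · by_cases h2 : slt (suc p) v
      · simp only [scan, if_neg h1, if_pos h2] at h
        obtain rfl := Option.some_injective _ h
        simp [scan]
      · simp only [scan, if_neg h1, if_neg h2, Option.map_eq_some_iff] at h
        obtain ⟨r', hr', rfl⟩ := h
        have := ih ⟨hcr, fun w hw => hb w (List.mem_cons_of_mem _ hw)⟩ hr'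
        simp [scan, h1, h2, this]

/-- The "no action at a gap" condition. -/
def Cgap (n : ℕ) (a b : V) : Prop := b ≠ suc a ∧ ¬ slt (suc a) b

lemma blocked_iff {n : ℕ} (p : V) (L : List V) :
    Blocked n p L ↔ (p :: L).Chain' (Cgap n) ∧ suc (L.getLastD p) ∉ cube n := by
  induction L generalizing p with
  | nil => simp [Blocked, Cgap, List.Chain']
  | cons v r ih =>
    rw [show (Blocked n p (v :: r)) = (v ≠ suc p ∧ ¬ slt (suc p) v ∧ Blocked n v r) from rfl,
      ih v, List.Chain', List.Chain', List.isChain_cons_cons, List.getLastD_cons]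
    unfold Cgap
    tauto

/-- No vertex can be added to a blocked chain. -/
lemma blocked_max {n : ℕ} {p : V} {L : List V} (hok : OKL n p L) (hbl : Blocked n p L)
    {w : V} (hw : w ∈ cube n) (hpw : slt p w) (hwL : w ∉ L)
    (hcomp : ∀ v ∈ L, slt v w ∨ slt w v) : False := by
  induction L generalizing p with
  | nil =>
    have hmw := mem_cube.mp hw
    have : suc p ∈ cube n := by
      refine mem_cube.mpr ?_
      obtain ⟨h1, h2, h3⟩ := hpw
      simp [suc]
      omega
    exact hbl this
  | cons v r ih =>
    obtain ⟨hne, hns, hbl'⟩ := hbl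
    obtain ⟨hc, hb⟩ := hok
    rcases hcomp v (List.mem_cons_self) with hvw | hwv
    · refine ih ⟨(List.isChain_cons_cons.mp hc).2, fun u hu => hb u (List.mem_cons_of_mem _ hu)⟩
        hbl' hvw (fun hmem => hwL (List.mem_cons_of_mem _ hmem))
        (fun u hu => hcomp u (List.mem_cons_of_mem _ hu))
    · -- w < v : then slt (suc p) v, contradiction
      refine hns ?_
      obtain ⟨a1, a2, a3⟩ := hpw
      obtain ⟨b1, b2, b3⟩ := hwv
      exact ⟨by simp [suc]; omega, by simp [suc]; omega, by simp [suc]; omega⟩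

lemma face_insert {n : ℕ} {F : Finset V} (hF : IsFace n F) {w : V} (hw : w ∈ cube n)
    (hcomp : ∀ u ∈ F, u ≠ w → slt u w ∨ slt w u) : IsFace n (insert w F) := by
  constructor
  · intro v hv
    rcases Finset.mem_insert.mp hv with rfl | hv
    · have := mem_cube.mp hw
      simp [Finset.mem_Icc]; omega
    · exact hF.1 v hv
  · intro u hu v hv hne
    rcases Finset.mem_insert.mp hu with hu' | hu' <;> rcases Finset.mem_insert.mp hv with hv' | hv'
    · exact absurd (hu'.trans hv'.symm) hne
    · subst hu'
      rcases hcomp v hv' (fun h => hne h.symm) with h | h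
      · exact Or.inr h
      · exact Or.inl h
    · subst hv'
      exact hcomp u hu' hne
    · exact hF.2 u hu' v hv' hne

lemma no_insert {n : ℕ} {F : Finset V} (hF : IsFacet n F) {w : V} (hw : w ∈ cube n)
    (hcomp : ∀ u ∈ F, slt u w ∨ slt w u) : False := by
  have hwF : w ∉ F := by
    intro hmem
    rcases hcomp w hmem with h | h <;> exact slt_irrefl _ h
  have hface : IsFace n (insert w F) :=
    face_insert hF.1 hw (fun u hu hne => hcomp u hu)
  have := hF.2 _ hface (Finset.subset_insert _ _)
  exact hwF (this ▸ Finset.mem_insert_self w F)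

abbrev z3 : V := (0, 0, 0)

lemma okl_zero {n : ℕ} {L : List V} (hc : L.Chain' slt) (hb : ∀ v ∈ L, v ∈ cube n) :
    OKL n z3 L := by
  refine ⟨List.isChain_cons.mpr ⟨?_, hc⟩, hb⟩
  intro y hy
  have hyL : y ∈ L := by
    cases L with
    | nil => simp at hy
    | cons a l => simp at hy; subst hy; exact List.mem_cons_self
  have := mem_cube.mp (hb y hyL)
  refine ⟨?_, ?_, ?_⟩ <;> simp only [z3] <;> omega

lemma V_ext {v w : V} (h1 : v.1 = w.1) (h2 : v.2.1 = w.2.1) (h3 : v.2.2 = w.2.2) : v = w := by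
  obtain ⟨a, b, c⟩ := v
  obtain ⟨d, e, f⟩ := w
  simp_all

lemma ne_suc_of_gap {a b : V} (hab : slt a b) (hne : b ≠ suc a) :
    1 < b.1 - a.1 ∨ 1 < b.2.1 - a.2.1 ∨ 1 < b.2.2 - a.2.2 := by
  by_contra hcon
  push_neg at hcon
  obtain ⟨h1, h2, h3⟩ := hab
  refine hne ?_
  obtain ⟨b1, b2, b3⟩ := b
  obtain ⟨a1, a2, a3⟩ := a
  simp_all [suc]
  omega

lemma suc_of_no_gap {a b : V} (hab : slt a b) (hgap : ¬ (1 < b.1 - a.1 ∨ 1 < b.2.1 - a.2.1 ∨ 1 < b.2.2 - a.2.2)) :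
    b = suc a := by
  push_neg at hgap
  obtain ⟨h1, h2, h3⟩ := hab
  obtain ⟨b1, b2, b3⟩ := b
  obtain ⟨a1, a2, a3⟩ := a
  simp_all [suc]
  omega

lemma blocked_isFacet {n : ℕ} {L : List V} (hc : L.Chain' slt) (hb : ∀ v ∈ L, v ∈ cube n)
    (hbl : Blocked n z3 L) : IsFacet n L.toFinset := by
  refine ⟨toFinset_face hc hb, ?_⟩
  intro G hG hsub
  by_contra hne
  obtain ⟨w, hwG, hwF⟩ := Finset.exists_of_ssubset (lt_of_le_of_ne hsub hne)
  have hwc : w ∈ cube n := by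
    have := hG.1 w hwG
    simp only [Finset.mem_Icc] at this
    exact mem_cube.mpr (by omega)
  have hwcc := mem_cube.mp hwc
  refine blocked_max (okl_zero hc hb) hbl hwc ⟨by simp only [z3]; omega, by simp only [z3]; omega, by simp only [z3]; omega⟩
    (fun hmem => hwF (List.mem_toFinset.mpr hmem)) ?_
  intro v hv
  have hvG : v ∈ G := hsub (List.mem_toFinset.mpr hv)
  exact hG.2 v hvG w hwG (fun h => hwF (h ▸ List.mem_toFinset.mpr hv))

lemma blocked_bcond {n : ℕ} {L : List V} (hc : L.Chain' slt) (hb : ∀ v ∈ L, v ∈ cube n)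
    (hbl : Blocked n z3 L) : ∀ ℓ : ℕ, ∀ h : ℓ < L.length, BCond L ℓ h := by
  intro ℓ h
  have hchain : (z3 :: L).Chain' (Cgap n) := ((blocked_iff z3 L).mp hbl).1
  have hg : Cgap n ((z3 :: L).get ⟨ℓ, by simp only [List.length_cons]; omega⟩) ((z3 :: L).get ⟨ℓ + 1, by simp only [List.length_cons]; omega⟩) :=
    List.isChain_iff_getElem.mp hchain ℓ (by simp only [List.length_cons]; omega)
  cases ℓ with
  | zero =>
    have e0 : (z3 :: L).get ⟨0, by simp only [List.length_cons]; omega⟩ = z3 := rfl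
    have e1 : (z3 :: L).get ⟨1, by simp only [List.length_cons]; omega⟩ = L.get ⟨0, h⟩ := rfl
    rw [e0, e1] at hg
    left
    refine ⟨rfl, ?_⟩
    have hm := mem_cube.mp (hb (L.get ⟨0, h⟩) (List.get_mem L ⟨0, h⟩))
    have hne := hg.1
    by_contra hcon
    push_neg at hcon
    refine hne ?_
    have hsz : suc z3 = ((1, 1, 1) : V) := rfl
    rw [hsz]
    exact V_ext (show _ = 1 by omega) (show _ = 1 by omega) (show _ = 1 by omega)
  | succ j =>
    have e0 : (z3 :: L).get ⟨j + 1, by simp only [List.length_cons]; omega⟩ = L.get ⟨j, by omega⟩ := rfl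
    have e1 : (z3 :: L).get ⟨j + 1 + 1, by simp only [List.length_cons]; omega⟩ = L.get ⟨j + 1, h⟩ := rfl
    rw [e0, e1] at hg
    right
    refine ⟨Nat.succ_pos j, ?_⟩
    have hab : slt (L.get ⟨j, by omega⟩) (L.get ⟨j + 1, h⟩) :=
      List.pairwise_iff_get.mp (pairwise_of_chain hc) _ _ (by simp)
    have := ne_suc_of_gap hab hg.1
    simpa using this

lemma slt_getLastD {L : List V} (hpw : L.Pairwise slt) {u : V} (hu : u ∈ L) (d : V) :
    u = L.getLastD d ∨ slt u (L.getLastD d) := by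
  induction L generalizing d with
  | nil => simp at hu
  | cons v r ih =>
    rw [List.getLastD_cons]
    cases r with
    | nil =>
      simp at hu
      subst hu
      simp [List.getLastD]
    | cons w r' =>
      rcases List.mem_cons.mp hu with rfl | hu'
      · right
        have hlast : w :: r' ≠ [] := by simp
        have hmem : (w :: r').getLastD u ∈ w :: r' := by
          rw [List.getLastD_eq_getLast?, List.getLast?_eq_getLast hlast]
          simp [List.getLast_mem]
        exact (List.pairwise_cons.mp hpw).1 _ hmem
      · exact ih (List.pairwise_cons.mp hpw).2 hu' v

lemma compare_of_get {L : List V} (hpw : L.Pairwise slt) {i : ℕ} (hi : i < L.length) {w : V}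
    (h1 : ∀ _ : 0 < i, slt (L.get ⟨i - 1, by omega⟩) w)
    (h2 : slt w (L.get ⟨i, hi⟩)) : ∀ u ∈ L, slt u w ∨ slt w u := by
  intro u hu
  obtain ⟨⟨k, hk⟩, hku⟩ := List.mem_iff_get.mp hu
  rcases lt_or_ge k i with hki | hki
  · left
    have hipos : 0 < i := by omega
    have hw' := h1 hipos
    rcases lt_or_eq_of_le (by omega : k ≤ i - 1) with h' | h'
    · have hs : slt (L.get ⟨k, hk⟩) (L.get ⟨i - 1, by omega⟩) :=
        List.pairwise_iff_get.mp hpw ⟨k, hk⟩ ⟨i - 1, by omega⟩ (by simpa using h')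
      rw [hku] at hs
      exact Trans.trans hs hw'
    · have he : (⟨k, hk⟩ : Fin L.length) = ⟨i - 1, by omega⟩ := Fin.ext h'
      rw [← hku, he]
      exact hw'
  · right
    rcases lt_or_eq_of_le hki with h' | h'
    · have hs : slt (L.get ⟨i, hi⟩) (L.get ⟨k, hk⟩) :=
        List.pairwise_iff_get.mp hpw ⟨i, hi⟩ ⟨k, hk⟩ (by simpa using h')
      rw [hku] at hs
      exact Trans.trans h2 hs
    · have he : (⟨k, hk⟩ : Fin L.length) = ⟨i, hi⟩ := Fin.ext h'.symm
      rw [← hku, he]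
      exact h2

set_option maxHeartbeats 2000000 in
lemma homfacet_blocked {n : ℕ} {L : List V} (hc : L.Chain' slt) (hb : ∀ v ∈ L, v ∈ cube n)
    (hhf : HomFacet n L.toFinset) : Blocked n z3 L := by
  have hpw := pairwise_of_chain hc
  rw [blocked_iff]
  constructor
  · -- Chain' (Cgap n) (z3 :: L)
    rw [List.Chain', List.isChain_iff_getElem]
    intro i hi
    simp only [List.length_cons] at hi
    show Cgap n ((z3 :: L).get ⟨i, by simp only [List.length_cons]; omega⟩) ((z3 :: L).get ⟨i + 1, by simp only [List.length_cons]; omega⟩)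
    have hB := hhf.2 L hc rfl i (by omega)
    have hbi : L.get ⟨i, by omega⟩ ∈ cube n := hb _ (List.get_mem L ⟨i, by omega⟩)
    have hbc := mem_cube.mp hbi
    constructor
    · -- not tight
      cases i with
      | zero =>
        rcases hB with ⟨_, hB⟩ | ⟨h0, _⟩
        · intro hcon
          have e1 : (z3 :: L).get ⟨1, by simp only [List.length_cons]; omega⟩
              = L.get ⟨0, by omega⟩ := rfl
          have e0 : suc ((z3 :: L).get ⟨0, by simp only [List.length_cons]; omega⟩)
              = ((1, 1, 1) : V) := rfl
          rw [e1, e0] at hcon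
          rw [hcon] at hB
          simp at hB
        · omega
      | succ j =>
        rcases hB with ⟨h0, _⟩ | ⟨_, hB⟩
        · omega
        · intro hcon
          have e1 : (z3 :: L).get ⟨j + 1 + 1, by simp only [List.length_cons]; omega⟩
              = L.get ⟨j + 1, by omega⟩ := rfl
          have e0 : (z3 :: L).get ⟨j + 1, by simp only [List.length_cons]; omega⟩
              = L.get ⟨j, by omega⟩ := rfl
          rw [e1, e0] at hcon
          have hj : j + 1 - 1 = j := by omega
          simp only [hj] at hB
          rw [hcon] at hB
          simp [suc] at hB
    · -- not insertable
      intro hcon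
      cases i with
      | zero =>
        have hcon' : slt (suc z3) (L.get ⟨0, by omega⟩) := hcon
        have hwc : suc z3 ∈ cube n := by
          have e1 : (suc z3).1 = 1 := rfl
          have e2 : (suc z3).2.1 = 1 := rfl
          have e3 : (suc z3).2.2 = 1 := rfl
          obtain ⟨c1, c2, c3⟩ := hcon'
          refine mem_cube.mpr ⟨⟨?_, ?_⟩, ⟨?_, ?_⟩, ?_, ?_⟩ <;> omega
        refine no_insert hhf.1 hwc ?_
        intro u hu
        exact compare_of_get hpw (by omega) (fun h0 => absurd h0 (by omega)) hcon' u
          (List.mem_toFinset.mp hu)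
      | succ j =>
        have hcon' : slt (suc (L.get ⟨j, by omega⟩)) (L.get ⟨j + 1, by omega⟩) := hcon
        have hwc : suc (L.get ⟨j, by omega⟩) ∈ cube n := by
          have e1 : (suc (L.get ⟨j, by omega⟩)).1 = (L.get ⟨j, by omega⟩).1 + 1 := rfl
          have e2 : (suc (L.get ⟨j, by omega⟩)).2.1 = (L.get ⟨j, by omega⟩).2.1 + 1 := rfl
          have e3 : (suc (L.get ⟨j, by omega⟩)).2.2 = (L.get ⟨j, by omega⟩).2.2 + 1 := rfl
          obtain ⟨c1, c2, c3⟩ := hcon'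
          refine mem_cube.mpr ⟨⟨?_, ?_⟩, ⟨?_, ?_⟩, ?_, ?_⟩ <;> omega
        refine no_insert hhf.1 hwc ?_
        intro u hu
        refine compare_of_get hpw (by omega : j + 1 < L.length) ?_ hcon' u
          (List.mem_toFinset.mp hu)
        intro _
        have he : (⟨j + 1 - 1, by omega⟩ : Fin L.length) = ⟨j, by omega⟩ :=
          Fin.mk_eq_mk.mpr (by omega)
        rw [he]
        exact slt_suc_self _
  · -- the top is blocked
    intro hcon
    have hlast : ∀ u ∈ L, slt u (suc (L.getLastD z3)) := by
      intro u hu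
      rcases slt_getLastD hpw hu z3 with h' | h'
      · rw [h']
        exact slt_suc_self _
      · exact Trans.trans h' (slt_suc_self _)
    exact no_insert hhf.1 hcon (fun u hu => Or.inl (hlast u (List.mem_toFinset.mp hu)))

lemma blocked_homfacet {n : ℕ} {L : List V} (hc : L.Chain' slt) (hb : ∀ v ∈ L, v ∈ cube n)
    (hbl : Blocked n z3 L) : HomFacet n L.toFinset := by
  refine ⟨blocked_isFacet hc hb hbl, ?_⟩
  intro L' hc' hfs ℓ h
  have heq : L' = L := chain_eq_of_toFinset_eq hc' hc hfs
  subst heq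
  exact blocked_bcond hc' hb hbl ℓ h

lemma sum_nonhom (n : ℕ) :
    ∑ L ∈ (CL n).filter (fun L => ¬ HomFacet n L.toFinset), (-1 : ℤ) ^ L.length = 0 := by
  refine Finset.sum_involution (fun L _ => (scan n z3 L).getD []) ?_ ?_ ?_ ?_
  · intro L hL
    obtain ⟨hCL, hnh⟩ := Finset.mem_filter.mp hL
    obtain ⟨hc, hb⟩ := mem_CL.mp hCL
    cases hs : scan n z3 L with
    | none =>
      exact absurd (blocked_homfacet hc hb ((scan_eq_none_iff n z3 L).mp hs)) hnh
    | some L' =>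
      simp only [hs, Option.getD_some]
      rcases scan_length hs with h' | h' <;> rw [h'] <;> ring
  · intro L hL _
    obtain ⟨hCL, hnh⟩ := Finset.mem_filter.mp hL
    obtain ⟨hc, hb⟩ := mem_CL.mp hCL
    cases hs : scan n z3 L with
    | none =>
      exact absurd (blocked_homfacet hc hb ((scan_eq_none_iff n z3 L).mp hs)) hnh
    | some L' =>
      simp only [hs, Option.getD_some]
      intro heq
      rcases scan_length hs with h' | h' <;> rw [heq] at h' <;> omega
  · intro L hL
    obtain ⟨hCL, hnh⟩ := Finset.mem_filter.mp hL
    obtain ⟨hc, hb⟩ := mem_CL.mp hCL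
    cases hs : scan n z3 L with
    | none =>
      exact absurd (blocked_homfacet hc hb ((scan_eq_none_iff n z3 L).mp hs)) hnh
    | some L' =>
      simp only [hs, Option.getD_some]
      have hok' : OKL n z3 L' := scan_okl hs (okl_zero hc hb)
      have hc' : L'.Chain' slt := (List.isChain_cons.mp hok'.1).2
      refine Finset.mem_filter.mpr ⟨mem_CL.mpr ⟨hc', hok'.2⟩, ?_⟩
      intro hhf
      have hinv : scan n z3 L' = some L := scan_invol (okl_zero hc hb) hs
      have : Blocked n z3 L' := homfacet_blocked hc' hok'.2 hhf
      rw [← scan_eq_none_iff] at this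
      rw [hinv] at this
      simp at this
  · intro L hL
    obtain ⟨hCL, hnh⟩ := Finset.mem_filter.mp hL
    obtain ⟨hc, hb⟩ := mem_CL.mp hCL
    have hsome : ∃ L', scan n z3 L = some L' := by
      cases hs : scan n z3 L with
      | none =>
        exact absurd (blocked_homfacet hc hb ((scan_eq_none_iff n z3 L).mp hs)) hnh
      | some L' => exact ⟨L', rfl⟩
    obtain ⟨L', hs⟩ := hsome
    have hinv : scan n z3 L' = some L := scan_invol (okl_zero hc hb) hs
    show (scan n z3 ((scan n z3 L).getD [])).getD [] = L
    rw [hs]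
    simp [hinv]

lemma main (n : ℕ) :
    (∑ s ∈ Finset.range (n + 1), (-1 : ℤ) ^ s * (n.choose s : ℤ) ^ 3) =
      ∑ F ∈ (Finset.Icc 1 n ×ˢ Finset.Icc 1 n ×ˢ Finset.Icc 1 n).powerset.filter
          (fun F => HomFacet n F), (-1 : ℤ) ^ F.card := by
  have e1 : (Finset.Icc 1 n ×ˢ Finset.Icc 1 n ×ˢ Finset.Icc 1 n).powerset.filter
      (fun F => HomFacet n F) = (Faces n).filter (fun F => HomFacet n F) := by
    rw [Faces, Finset.filter_filter]
    refine Finset.filter_congr ?_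
    intro F _
    have : HomFacet n F → IsFace n F := fun h => h.1.1
    show HomFacet n F ↔ IsFace n F ∧ HomFacet n F
    tauto
  rw [e1, sum_faces_eq (fun F => HomFacet n F), ← sum_CL n]
  rw [← Finset.sum_filter_add_sum_filter_not (CL n) (fun L => HomFacet n L.toFinset)
    (fun L => (-1 : ℤ) ^ L.length), sum_nonhom n, add_zero]

end EP

open Classical in
/-- Euler–Poincaré for `Δ(n)`: the alternating sum of cubes of binomial coefficients
equals the signed count of the homology facets of `Δ(n)`. -/
theorem alternating_sum_eq_signed_homology_facets (n : ℕ) :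
    (∑ s ∈ Finset.range (n + 1), (-1 : ℤ) ^ s * (n.choose s : ℤ) ^ 3) =
      ∑ F ∈ (Finset.Icc 1 n ×ˢ Finset.Icc 1 n ×ˢ Finset.Icc 1 n).powerset.filter
          (fun F => HomFacet n F), (-1 : ℤ) ^ F.card := by
  exact EP.main n
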